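/- Let f₀ ∈ F and let φ_ap ∈ C([0,∞),F) be an approximate solution of VP(f₀). Suppose there are constants E, D ∈ [0,∞) such that ‖E(φ_ap)(t)‖ ≤ E e^{−Bt} and ‖φ_ap(t)‖ ≤ D e^{−Bt} for all t ∈ [0,∞), and that 2√(KNE) + 2KND ≤ 1. Then VP(f₀) has a global solution φ : [0,∞) → F and ‖φ(t) − φ_ap(t)‖ ≤ R e^{−Bt} for all t ∈ [0,∞), where R := (1 − 2KND − √((1 − 2KND)² − 4KNE))/(2KN). -/

import Mathlib

open Set MeasureTheory intervalIntegral Filter Topology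

lemma aux_mum_int {μm : ℝ → ℝ} (hcont : ContinuousOn μm (Ioi 0))
    (hpos : ∀ t > (0:ℝ), 0 < μm t) {σ : ℝ} (hσ : σ ∈ Ioc (0:ℝ) 1)
    (hO : ∃ C : ℝ, ∃ δ > (0:ℝ), ∀ t ∈ Ioo (0:ℝ) δ, μm t ≤ C / t ^ (1 - σ)) :
    ∀ t ≥ (0:ℝ), IntervalIntegrable μm volume 0 t := by
  obtain ⟨C, δ, hδ, hC⟩ := hO
  intro t ht
  rcases eq_or_lt_of_le ht with h | h
  · simp [← h]
  set b := min t (δ/2) with hb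
  have hb0 : 0 < b := lt_min h (by linarith)
  have hbt : b ≤ t := min_le_left _ _
  have hbδ : b < δ := lt_of_le_of_lt (min_le_right _ _) (by linarith)
  have h1 : IntervalIntegrable μm volume 0 b := by
    rw [intervalIntegrable_iff_integrableOn_Ioc_of_le hb0.le]
    have hmeas : AEStronglyMeasurable μm (volume.restrict (Ioc 0 b)) :=
      (hcont.mono (fun x hx => hx.1)).aestronglyMeasurable measurableSet_Ioc
    have hg : IntegrableOn (fun x : ℝ => C * x ^ (σ - 1)) (Ioc 0 b) volume := by
      rw [← intervalIntegrable_iff_integrableOn_Ioc_of_le hb0.le]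
      exact (intervalIntegrable_rpow' (by linarith [hσ.1])).const_mul C
    refine Integrable.mono hg hmeas (ae_restrict_of_forall_mem measurableSet_Ioc ?_)
    intro x hx
    have hx0 : 0 < x := hx.1
    have hxδ : x ∈ Ioo (0:ℝ) δ := ⟨hx0, lt_of_le_of_lt hx.2 hbδ⟩
    have : μm x ≤ C * x ^ (σ - 1) := by
      have := hC x hxδ
      rw [div_eq_mul_inv, ← Real.rpow_neg hx0.le] at this
      simpa [neg_sub] using this
    rw [Real.norm_eq_abs, Real.norm_eq_abs, abs_of_pos (hpos x hx0)]
    exact this.trans (le_abs_self _)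
  have h2 : IntervalIntegrable μm volume b t := by
    apply ContinuousOn.intervalIntegrable
    apply hcont.mono
    rw [uIcc_of_le hbt]
    exact fun x hx => lt_of_lt_of_le hb0 hx.1
  exact h1.trans h2

section
variable {F Fm : Type*}
    [NormedAddCommGroup F] [NormedSpace ℝ F]
    [NormedAddCommGroup Fm] [NormedSpace ℝ Fm]
    (W : ℝ → Fm → F) (μm : ℝ → ℝ) (B : ℝ)

lemma aux_Wmeas
    (hWcont : ContinuousOn (fun p : Fm × ℝ => W p.2 p.1) (univ ×ˢ Ioi (0:ℝ)))
    {t : ℝ} (h : ℝ → Fm) (hh : ContinuousOn h (Icc 0 t)) :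
    ContinuousOn (fun s => W (t - s) (h s)) (Ioo 0 t) := by
  have hmap : MapsTo (fun s : ℝ => ((h s, t - s) : Fm × ℝ)) (Ioo 0 t) (univ ×ˢ Ioi (0:ℝ)) :=
    fun s hs => ⟨mem_univ _, by simpa using hs.2⟩
  exact hWcont.comp
    (((hh.mono Ioo_subset_Icc_self).prodMk
      ((continuous_const.sub continuous_id).continuousOn))) hmap

lemma aux_W_int
    (hWcont : ContinuousOn (fun p : Fm × ℝ => W p.2 p.1) (univ ×ˢ Ioi (0:ℝ)))
    (hB : 0 ≤ B)
    (hμm_bd : ∀ τ > (0:ℝ), ∀ f : Fm, ‖W τ f‖ ≤ μm τ * Real.exp (-(B * τ)) * ‖f‖)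
    (hμm_pos : ∀ τ > (0:ℝ), 0 < μm τ)
    {t : ℝ} (ht : 0 < t) (hμint : IntervalIntegrable μm volume 0 t)
    (h : ℝ → Fm) (hh : ContinuousOn h (Icc 0 t)) :
    IntervalIntegrable (fun s => W (t - s) (h s)) volume 0 t := by
  obtain ⟨M, hM⟩ := isCompact_Icc.exists_bound_of_continuousOn hh
  rw [intervalIntegrable_iff_integrableOn_Ioc_of_le ht.le,
    integrableOn_Ioc_iff_integrableOn_Ioo]
  have hmeas : AEStronglyMeasurable (fun s => W (t - s) (h s))
      (volume.restrict (Ioo 0 t)) :=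
    (aux_Wmeas W hWcont h hh).aestronglyMeasurable measurableSet_Ioo
  have hgint : IntegrableOn (fun s => μm (t - s) * max M 0) (Ioo 0 t) volume := by
    have h1 : IntervalIntegrable (fun s => μm (t - s)) volume 0 t := by
      simpa using (hμint.comp_sub_left t).symm
    have := (h1.mul_const (max M 0))
    rw [intervalIntegrable_iff_integrableOn_Ioc_of_le ht.le,
      integrableOn_Ioc_iff_integrableOn_Ioo] at this
    exact this
  refine Integrable.mono' hgint hmeas
    (ae_restrict_of_forall_mem measurableSet_Ioo ?_)
  intro s hs
  have hts : 0 < t - s := by simpa using hs.2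
  have h1 := hμm_bd (t - s) hts (h s)
  have h2 : μm (t - s) * Real.exp (-(B * (t - s))) * ‖h s‖ ≤ μm (t - s) * max M 0 := by
    have he : Real.exp (-(B * (t - s))) ≤ 1 :=
      Real.exp_le_one_iff.mpr (by nlinarith)
    have hμ := (hμm_pos (t - s) hts).le
    have hMs : ‖h s‖ ≤ max M 0 := le_trans (hM s ⟨hs.1.le, hs.2.le⟩) (le_max_left _ _)
    have h3 : Real.exp (-(B * (t - s))) * ‖h s‖ ≤ 1 * max M 0 :=
      mul_le_mul he hMs (norm_nonneg _) one_pos.le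
    nlinarith [mul_le_mul_of_nonneg_left h3 hμ]
  exact h1.trans h2
end

lemma aux_ker_int (μm : ℝ → ℝ) (B : ℝ) {t : ℝ}
    (hμint : IntervalIntegrable μm volume 0 t) (ht : (0:ℝ) ≤ t) :
    IntervalIntegrable (fun s => μm (t - s) * Real.exp (-(B * s))) volume 0 t := by
  have h1 : IntervalIntegrable (fun s => μm (t - s)) volume 0 t := by
    simpa using (hμint.comp_sub_left t).symm
  exact h1.mul_continuousOn (Continuous.continuousOn (by continuity))

lemma aux_est {F Fm : Type*}
    [NormedAddCommGroup F] [NormedSpace ℝ F]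
    [NormedAddCommGroup Fm] [NormedSpace ℝ Fm]
    (W : ℝ → Fm → F) (μm : ℝ → ℝ) (B N : ℝ)
    (hB : 0 ≤ B) (hN : 0 ≤ N)
    (hμm_bd : ∀ τ > (0:ℝ), ∀ f : Fm, ‖W τ f‖ ≤ μm τ * Real.exp (-(B * τ)) * ‖f‖)
    (hμm_pos : ∀ τ > (0:ℝ), 0 < μm τ)
    {t : ℝ} (ht : 0 ≤ t) (hμint : IntervalIntegrable μm volume 0 t)
    (hμm_N : (∫ s in (0:ℝ)..t, μm (t - s) * Real.exp (-(B * s))) ≤ N)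
    (h : ℝ → Fm) (c : ℝ) (hc : 0 ≤ c)
    (hbd : ∀ s ∈ Icc (0:ℝ) t, ‖h s‖ ≤ c * Real.exp (-(B * s)) * Real.exp (-(B * s))) :
    ‖∫ s in (0:ℝ)..t, W (t - s) (h s)‖ ≤ c * N * Real.exp (-(B * t)) := by
  rcases eq_or_lt_of_le ht with rfl | ht'
  · simp only [intervalIntegral.integral_same, norm_zero]
    positivity
  have hne : ∀ᵐ s ∂(volume : Measure ℝ), s ≠ t := by
    rw [ae_iff]
    simpa [not_not, setOf_eq_eq_singleton] using measure_singleton t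
  -- the scalar dominating function
  set g : ℝ → ℝ := fun s => (μm (t - s) * Real.exp (-(B * s))) * (c * Real.exp (-(B * t)))
    with hg
  have hgint : IntervalIntegrable g volume 0 t :=
    (aux_ker_int μm B hμint ht).mul_const _
  have hbd' : ∀ᵐ s ∂(volume.restrict (Set.uIoc 0 t)), ‖W (t - s) (h s)‖ ≤ g s := by
    rw [uIoc_of_le ht]
    filter_upwards [ae_restrict_of_ae hne, ae_restrict_mem measurableSet_Ioc] with s hst hs
    have hs0 : 0 < s := hs.1
    have hst' : s < t := lt_of_le_of_ne hs.2 hst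
    have hts : 0 < t - s := by linarith
    have hexp : Real.exp (-(B * (t - s))) * Real.exp (-(B * s)) = Real.exp (-(B * t)) := by
      rw [← Real.exp_add]; ring_nf
    have h1 := hμm_bd (t - s) hts (h s)
    have h2 : μm (t - s) * Real.exp (-(B * (t - s))) * ‖h s‖ ≤ g s := by
      have h3 : ‖h s‖ ≤ c * Real.exp (-(B * s)) * Real.exp (-(B * s)) :=
        hbd s ⟨hs0.le, hs.2⟩
      have h4 : μm (t - s) * Real.exp (-(B * (t - s))) *
          (c * Real.exp (-(B * s)) * Real.exp (-(B * s))) = g s := by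
        rw [hg]; dsimp only; rw [← hexp]; ring
      have h5 : (0:ℝ) ≤ μm (t - s) * Real.exp (-(B * (t - s))) := by
        have := (hμm_pos (t - s) hts).le
        positivity
      calc μm (t - s) * Real.exp (-(B * (t - s))) * ‖h s‖
          ≤ μm (t - s) * Real.exp (-(B * (t - s))) *
            (c * Real.exp (-(B * s)) * Real.exp (-(B * s))) :=
            mul_le_mul_of_nonneg_left h3 h5
        _ = g s := h4
    exact h1.trans h2
  have := intervalIntegral.norm_integral_le_abs_of_norm_le hbd' hgint
  refine this.trans ?_
  have hker_nonneg : (0:ℝ) ≤ ∫ s in (0:ℝ)..t, μm (t - s) * Real.exp (-(B * s)) := by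
    apply intervalIntegral.integral_nonneg_of_ae_restrict ht
    filter_upwards [ae_restrict_of_ae hne, ae_restrict_mem measurableSet_Icc] with s hst hs
    have hts : 0 < t - s := lt_of_le_of_ne (by linarith [hs.2]) fun hh => hst (by linarith)
    have := (hμm_pos (t - s) hts).le
    positivity
  have hsplit : (∫ s in (0:ℝ)..t, g s) =
      (∫ s in (0:ℝ)..t, μm (t - s) * Real.exp (-(B * s))) * (c * Real.exp (-(B * t))) := by
    rw [hg]
    exact intervalIntegral.integral_mul_const _ _
  rw [hsplit, abs_of_nonneg (by positivity)]
  have : (∫ s in (0:ℝ)..t, μm (t - s) * Real.exp (-(B * s))) * (c * Real.exp (-(B * t)))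
      ≤ N * (c * Real.exp (-(B * t))) :=
    mul_le_mul_of_nonneg_right hμm_N (by positivity)
  linarith [this]

lemma aux_repr {F Fm : Type*}
    [NormedAddCommGroup F] [NormedSpace ℝ F]
    [NormedAddCommGroup Fm] [NormedSpace ℝ Fm]
    (W : ℝ → Fm → F) (h : ℝ → Fm) {t : ℝ} (ht : (0:ℝ) ≤ t) :
    (∫ s in (0:ℝ)..t, W (t - s) (h s)) =
      ∫ τ, (Ioo (0:ℝ) t).indicator (fun τ => W τ (h (t - τ))) τ := by
  have h1 : (∫ s in (0:ℝ)..t, W (t - s) (h s)) = ∫ τ in (0:ℝ)..t, W τ (h (t - τ)) := by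
    have := intervalIntegral.integral_comp_sub_left (a := 0) (b := t)
      (fun τ => W τ (h (t - τ))) t
    simpa [sub_sub_cancel] using this
  rw [h1, intervalIntegral.integral_of_le ht, integral_Ioc_eq_integral_Ioo,
    ← MeasureTheory.integral_indicator measurableSet_Ioo]

lemma aux_cont {F Fm : Type*}
    [NormedAddCommGroup F] [NormedSpace ℝ F] [CompleteSpace F]
    [NormedAddCommGroup Fm] [NormedSpace ℝ Fm]
    (W : ℝ → Fm → F) (μm : ℝ → ℝ) (B : ℝ)
    (hWcont : ContinuousOn (fun p : Fm × ℝ => W p.2 p.1) (univ ×ˢ Ioi (0:ℝ)))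
    (hB : 0 ≤ B)
    (hμm_bd : ∀ τ > (0:ℝ), ∀ f : Fm, ‖W τ f‖ ≤ μm τ * Real.exp (-(B * τ)) * ‖f‖)
    (hμm_pos : ∀ τ > (0:ℝ), 0 < μm τ)
    (hμint : ∀ t ≥ (0:ℝ), IntervalIntegrable μm volume 0 t)
    (h : ℝ → Fm) (hh : ContinuousOn h (Ici 0)) :
    ContinuousOn (fun t => ∫ s in (0:ℝ)..t, W (t - s) (h s)) (Ici 0) := by
  intro t₀ ht₀
  have ht₀' : (0:ℝ) ≤ t₀ := ht₀
  set l := nhdsWithin t₀ (Ici (0:ℝ)) with hl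
  set G : ℝ → ℝ → F := fun t => (Ioo (0:ℝ) t).indicator (fun τ => W τ (h (t - τ))) with hG
  -- a uniform bound for h on [0, t₀+1]
  obtain ⟨M0, hM0⟩ := isCompact_Icc.exists_bound_of_continuousOn
    (hh.mono (Icc_subset_Ici_self : Icc (0:ℝ) (t₀ + 1) ⊆ Ici 0))
  set M : ℝ := max M0 0 with hM
  have hM0' : ∀ x ∈ Icc (0:ℝ) (t₀+1), ‖h x‖ ≤ M := fun x hx =>
    (hM0 x hx).trans (le_max_left _ _)
  have hMnn : (0:ℝ) ≤ M := le_max_right _ _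
  -- measurability of each G t
  have hmeas : ∀ t : ℝ, AEStronglyMeasurable (G t) volume := by
    intro t
    rcases le_or_gt t 0 with h0 | h0
    · have : G t = fun _ => 0 := by
        funext τ; rw [hG]; simp [Ioo_eq_empty (by linarith : ¬ (0:ℝ) < t)]
      rw [this]; exact aestronglyMeasurable_const
    · rw [hG]
      apply (aestronglyMeasurable_indicator_iff measurableSet_Ioo).mpr
      apply ContinuousOn.aestronglyMeasurable _ measurableSet_Ioo
      have hmap : MapsTo (fun τ : ℝ => ((h (t - τ), τ) : Fm × ℝ)) (Ioo 0 t)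
          (univ ×ˢ Ioi (0:ℝ)) := fun τ hτ => ⟨mem_univ _, hτ.1⟩
      refine hWcont.comp (ContinuousOn.prodMk ?_ continuous_id.continuousOn) hmap
      refine hh.comp ((continuous_const.sub continuous_id).continuousOn) ?_
      intro τ hτ
      simp only [mem_Ici]
      linarith [hτ.2]
  -- the dominating function
  set bound : ℝ → ℝ := (Ioo (0:ℝ) (t₀+1)).indicator (fun τ => μm τ * M) with hbound
  have hbound_nn : ∀ τ, 0 ≤ bound τ := by
    intro τ
    rw [hbound]
    apply Set.indicator_nonneg
    intro τ hτ
    exact mul_nonneg (hμm_pos τ hτ.1).le hMnn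
  have hbound_int : Integrable bound volume := by
    rw [hbound, integrable_indicator_iff measurableSet_Ioo]
    have := (hμint (t₀+1) (by linarith)).mul_const M
    rw [intervalIntegrable_iff_integrableOn_Ioc_of_le (by linarith),
      integrableOn_Ioc_iff_integrableOn_Ioo] at this
    exact this
  have hev_lt : ∀ᶠ t in l, t < t₀ + 1 :=
    nhdsWithin_le_nhds (Iio_mem_nhds (by linarith))
  have hev_mem : ∀ᶠ t in l, t ∈ Ici (0:ℝ) := self_mem_nhdsWithin
  have h_bound : ∀ᶠ t in l, ∀ᵐ τ ∂(volume : Measure ℝ), ‖G t τ‖ ≤ bound τ := by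
    filter_upwards [hev_lt, hev_mem] with t ht1 ht0
    apply Filter.Eventually.of_forall
    intro τ
    rcases em (τ ∈ Ioo (0:ℝ) t) with hτ | hτ
    · have hGt : G t τ = W τ (h (t - τ)) := by rw [hG]; exact indicator_of_mem hτ _
      have hbτ : bound τ = μm τ * M := by
        rw [hbound]
        exact indicator_of_mem (show τ ∈ Ioo (0:ℝ) (t₀+1) from ⟨hτ.1, lt_trans hτ.2 ht1⟩) _
      rw [hGt, hbτ]
      have h1 := hμm_bd τ hτ.1 (h (t - τ))
      have h2 : ‖h (t - τ)‖ ≤ M := hM0' _ ⟨by linarith [hτ.2], by linarith [hτ.1]⟩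
      have he : Real.exp (-(B * τ)) ≤ 1 := Real.exp_le_one_iff.mpr
        (by nlinarith [hτ.1.le])
      have hμ := (hμm_pos τ hτ.1).le
      have h3 : Real.exp (-(B * τ)) * ‖h (t - τ)‖ ≤ 1 * M :=
        mul_le_mul he h2 (norm_nonneg _) one_pos.le
      nlinarith [mul_le_mul_of_nonneg_left h3 hμ]
    · have hGt : G t τ = 0 := by rw [hG]; exact indicator_of_notMem hτ _
      rw [hGt, norm_zero]; exact hbound_nn τ
  -- a.e. pointwise convergence
  have h_lim : ∀ᵐ τ ∂(volume : Measure ℝ), Tendsto (fun t => G t τ) l (𝓝 (G t₀ τ)) := by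
    have hnull : (volume : Measure ℝ) ({0, t₀} : Set ℝ) = 0 :=
      ((Set.finite_singleton t₀).insert 0).measure_zero _
    filter_upwards [compl_mem_ae_iff.mpr hnull] with τ hτ
    simp only [mem_compl_iff, mem_insert_iff, mem_singleton_iff, not_or] at hτ
    obtain ⟨hτ0, hττ₀⟩ := hτ
    rcases em (τ ∈ Ioo (0:ℝ) t₀) with hin | hout
    · -- τ inside: G t τ = W τ (h (t-τ)) eventually, and this is continuous in t
      have hev : ∀ᶠ t in l, τ < t := nhdsWithin_le_nhds (Ioi_mem_nhds hin.2)
      have hstep1 : Tendsto (fun t : ℝ => t - τ) l (nhdsWithin (t₀ - τ) (Ici 0)) := by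
        rw [tendsto_nhdsWithin_iff]
        constructor
        · exact ((continuous_id.sub continuous_const).tendsto t₀).mono_left
            nhdsWithin_le_nhds
        · filter_upwards [hev] with t ht; simp only [mem_Ici]; linarith
      have hstep2 : Tendsto (fun t : ℝ => h (t - τ)) l (𝓝 (h (t₀ - τ))) :=
        Filter.Tendsto.comp (hh (t₀ - τ) (by simp only [mem_Ici]; linarith [hin.2])) hstep1
      have hstep3 : Tendsto (fun t : ℝ => ((h (t - τ), τ) : Fm × ℝ)) l
          (nhdsWithin ((h (t₀ - τ), τ) : Fm × ℝ) (univ ×ˢ Ioi 0)) := by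
        rw [tendsto_nhdsWithin_iff]
        refine ⟨hstep2.prodMk_nhds tendsto_const_nhds, ?_⟩
        exact Filter.Eventually.of_forall fun t => ⟨mem_univ _, hin.1⟩
      have hstep4 : Tendsto (fun t : ℝ => W τ (h (t - τ))) l (𝓝 (W τ (h (t₀ - τ)))) := by
        have hWc : Tendsto (fun p : Fm × ℝ => W p.2 p.1)
            (nhdsWithin ((h (t₀ - τ), τ) : Fm × ℝ) (univ ×ˢ Ioi 0))
            (𝓝 (W τ (h (t₀ - τ)))) :=
          hWcont ((h (t₀ - τ), τ) : Fm × ℝ) ⟨mem_univ _, hin.1⟩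
        exact hWc.comp hstep3
      have heq : ∀ᶠ t in l, W τ (h (t - τ)) = G t τ := by
        filter_upwards [hev] with t ht
        rw [hG]; exact (indicator_of_mem (show τ ∈ Ioo (0:ℝ) t from ⟨hin.1, ht⟩) (fun τ => W τ (h (t - τ)))).symm
      have heq0 : G t₀ τ = W τ (h (t₀ - τ)) := by
        rw [hG]; exact indicator_of_mem hin _
      rw [heq0]
      exact hstep4.congr' heq
    · -- τ outside [0, t₀]
      have : τ < 0 ∨ t₀ < τ := by
        rcases lt_trichotomy τ 0 with h1 | h1 | h1
        · exact Or.inl h1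
        · exact absurd h1 hτ0
        · right
          by_contra hcon
          push_neg at hcon
          exact hout ⟨h1, lt_of_le_of_ne hcon hττ₀⟩
      rcases this with hneg | hbig
      · have : ∀ t : ℝ, G t τ = 0 := by
          intro t; rw [hG]; exact indicator_of_notMem (fun hc => absurd hc.1 (by linarith)) _
        simp only [this]
        exact tendsto_const_nhds
      · have hev : ∀ᶠ t in l, t < τ := nhdsWithin_le_nhds (Iio_mem_nhds hbig)
        have heq0 : G t₀ τ = 0 := by
          rw [hG]; exact indicator_of_notMem (fun hc => absurd hc.2 (by linarith)) _
        rw [heq0]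
        apply Tendsto.congr' _ tendsto_const_nhds
        filter_upwards [hev] with t ht
        rw [hG]
        exact (indicator_of_notMem (fun hc => absurd hc.2 (by linarith)) _).symm
  have hmain : Tendsto (fun t => ∫ τ, G t τ) l (𝓝 (∫ τ, G t₀ τ)) :=
    tendsto_integral_filter_of_dominated_convergence bound
      (Filter.Eventually.of_forall hmeas) h_bound hbound_int h_lim
  -- transfer back to the interval integral
  have hfinal : Tendsto (fun t => ∫ s in (0:ℝ)..t, W (t - s) (h s)) l
      (𝓝 (∫ s in (0:ℝ)..t₀, W (t₀ - s) (h s))) := by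
    rw [aux_repr W h ht₀]
    apply hmain.congr'
    filter_upwards [hev_mem] with t ht
    exact (aux_repr W h ht).symm
  exact hfinal

lemma aux_xi_cont {Fm : Type*} [NormedAddCommGroup Fm] (ξ : ℝ → Fm)
    (hξ : ∀ C : Set ℝ, IsCompact C → C ⊆ Ici (0:ℝ) →
      ∃ M : ℝ, ∀ t ∈ C, ∀ t' ∈ C, ‖ξ t - ξ t'‖ ≤ M * |t - t'|) :
    ContinuousOn ξ (Ici 0) := by
  intro t₀ ht₀
  have ht₀' : (0:ℝ) ≤ t₀ := ht₀
  obtain ⟨M, hM⟩ := hξ (Icc 0 (t₀+1)) isCompact_Icc Icc_subset_Ici_self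
  have hmem : t₀ ∈ Icc (0:ℝ) (t₀+1) := ⟨ht₀', by linarith⟩
  rw [ContinuousWithinAt, tendsto_iff_norm_sub_tendsto_zero]
  have hev : ∀ᶠ t in nhdsWithin t₀ (Ici (0:ℝ)), ‖ξ t - ξ t₀‖ ≤ M * |t - t₀| := by
    filter_upwards [self_mem_nhdsWithin,
      nhdsWithin_le_nhds (Iio_mem_nhds (show t₀ < t₀ + 1 by linarith))] with t h1 h2
    exact hM t ⟨h1, h2.le⟩ t₀ hmem
  refine squeeze_zero_norm' (by simpa using hev) ?_
  have : Tendsto (fun t : ℝ => M * |t - t₀|) (𝓝 t₀) (𝓝 (M * |t₀ - t₀|)) :=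
    (continuous_const.mul ((continuous_id.sub continuous_const).abs)).tendsto t₀
  simpa using this.mono_left nhdsWithin_le_nhds

lemma aux_W_sub {F Fm : Type*}
    [NormedAddCommGroup F] [NormedSpace ℝ F]
    [NormedAddCommGroup Fm] [NormedSpace ℝ Fm]
    (ι : F →L[ℝ] Fm) (hι_inj : Function.Injective ι)
    (U : ℝ → Fm →L[ℝ] Fm) (W : ℝ → Fm → F)
    (hW : ∀ t > (0:ℝ), ∀ f : Fm, ι (W t f) = U t f) :
    ∀ τ > (0:ℝ), ∀ a b : Fm, W τ a - W τ b = W τ (a - b) := by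
  intro τ hτ a b
  apply hι_inj
  rw [map_sub, hW τ hτ, hW τ hτ, hW τ hτ, map_sub]

lemma aux_hcont {F Fm : Type*}
    [NormedAddCommGroup F] [NormedSpace ℝ F]
    [NormedAddCommGroup Fm] [NormedSpace ℝ Fm]
    (PP : F →L[ℝ] F →L[ℝ] Fm) (ξ : ℝ → Fm) (hξc : ContinuousOn ξ (Ici 0))
    (ψ : ℝ → F) (hψ : ContinuousOn ψ (Ici 0)) :
    ContinuousOn (fun s => PP (ψ s) (ψ s) + ξ s) (Ici 0) := by
  refine ContinuousOn.add ?_ hξc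
  exact ContinuousOn.clm_apply (PP.continuous.comp_continuousOn hψ) hψ

lemma aux_diff {F Fm : Type*}
    [NormedAddCommGroup F] [NormedSpace ℝ F] [CompleteSpace F]
    [NormedAddCommGroup Fm] [NormedSpace ℝ Fm]
    (W : ℝ → Fm → F) (B N K : ℝ)
    (PP : F →L[ℝ] F →L[ℝ] Fm) (ξ : ℝ → Fm)
    (hWint : ∀ t : ℝ, 0 < t → ∀ h : ℝ → Fm, ContinuousOn h (Icc 0 t) →
      IntervalIntegrable (fun s => W (t - s) (h s)) volume 0 t)
    (hest : ∀ t : ℝ, 0 ≤ t → ∀ h : ℝ → Fm, ∀ c : ℝ, 0 ≤ c →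
      (∀ s ∈ Icc (0:ℝ) t, ‖h s‖ ≤ c * Real.exp (-(B * s)) * Real.exp (-(B * s))) →
      ‖∫ s in (0:ℝ)..t, W (t - s) (h s)‖ ≤ c * N * Real.exp (-(B * t)))
    (hK : 0 < K) (hN : 0 ≤ N)
    (hPP : ∀ f g : F, ‖PP f g‖ ≤ K * ‖f‖ * ‖g‖)
    (hξc : ContinuousOn ξ (Ici 0))
    (hWsub : ∀ τ > (0:ℝ), ∀ a b : Fm, W τ a - W τ b = W τ (a - b))
    (f g : ℝ → F) (hf : ContinuousOn f (Ici 0)) (hg : ContinuousOn g (Ici 0))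
    (cf cg d : ℝ) (hcf0 : 0 ≤ cf) (hcg0 : 0 ≤ cg) (hd0 : 0 ≤ d)
    (hbf : ∀ s ≥ (0:ℝ), ‖f s‖ ≤ cf * Real.exp (-(B*s)))
    (hbg : ∀ s ≥ (0:ℝ), ‖g s‖ ≤ cg * Real.exp (-(B*s)))
    (hbd : ∀ s ≥ (0:ℝ), ‖f s - g s‖ ≤ d * Real.exp (-(B*s)))
    {t : ℝ} (ht : 0 ≤ t) :
    ‖(∫ s in (0:ℝ)..t, W (t - s) (PP (f s) (f s) + ξ s)) -
      ∫ s in (0:ℝ)..t, W (t - s) (PP (g s) (g s) + ξ s)‖ ≤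
      K * (cf + cg) * d * N * Real.exp (-(B*t)) := by
  have hcont : ∀ (u : ℝ → F), ContinuousOn u (Ici 0) →
      ContinuousOn (fun s => PP (u s) (u s) + ξ s) (Icc (0:ℝ) t) := by
    intro u hu
    refine ContinuousOn.mono ?_ Icc_subset_Ici_self
    exact (ContinuousOn.clm_apply (PP.continuous.comp_continuousOn hu) hu).add hξc
  rcases eq_or_lt_of_le ht with rfl | ht'
  · simp only [intervalIntegral.integral_same, sub_zero, norm_zero]
    positivity
  have h1 := hWint t ht' _ (hcont f hf)
  have h2 := hWint t ht' _ (hcont g hg)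
  rw [← intervalIntegral.integral_sub h1 h2]
  have hne : ∀ᵐ s ∂(volume : Measure ℝ), s ≠ t := by
    rw [ae_iff]
    simpa [not_not, setOf_eq_eq_singleton] using measure_singleton t
  have hcongr : (∫ s in (0:ℝ)..t,
        (W (t - s) (PP (f s) (f s) + ξ s) - W (t - s) (PP (g s) (g s) + ξ s))) =
      ∫ s in (0:ℝ)..t, W (t - s) (PP (f s) (f s) - PP (g s) (g s)) := by
    apply intervalIntegral.integral_congr_ae
    filter_upwards [hne] with s hst hs
    rw [uIoc_of_le ht] at hs
    have hts : 0 < t - s := by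
      rcases lt_or_eq_of_le hs.2 with h | h
      · linarith
      · exact absurd h hst
    rw [hWsub (t - s) hts]
    congr 1
    abel
  rw [hcongr]
  have hbound : ∀ s ∈ Icc (0:ℝ) t, ‖PP (f s) (f s) - PP (g s) (g s)‖ ≤
      (K * (cf + cg) * d) * Real.exp (-(B*s)) * Real.exp (-(B*s)) := by
    intro s hs
    have hs0 : (0:ℝ) ≤ s := hs.1
    have hsplit : PP (f s) (f s) - PP (g s) (g s) =
        PP (f s - g s) (f s) + PP (g s) (f s - g s) := by
      simp only [map_sub, ContinuousLinearMap.sub_apply]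
      abel
    rw [hsplit]
    set e := Real.exp (-(B*s)) with he
    have he0 : 0 < e := Real.exp_pos _
    have e1 : ‖f s - g s‖ * ‖f s‖ ≤ (d * e) * (cf * e) :=
      mul_le_mul (hbd s hs0) (hbf s hs0) (norm_nonneg _) (by positivity)
    have e2 : ‖g s‖ * ‖f s - g s‖ ≤ (cg * e) * (d * e) :=
      mul_le_mul (hbg s hs0) (hbd s hs0) (norm_nonneg _) (by positivity)
    calc ‖PP (f s - g s) (f s) + PP (g s) (f s - g s)‖
        ≤ ‖PP (f s - g s) (f s)‖ + ‖PP (g s) (f s - g s)‖ := norm_add_le _ _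
      _ ≤ K * ‖f s - g s‖ * ‖f s‖ + K * ‖g s‖ * ‖f s - g s‖ :=
          add_le_add (hPP _ _) (hPP _ _)
      _ ≤ K * (cf + cg) * d * e * e := by
          nlinarith [mul_le_mul_of_nonneg_left e1 hK.le,
            mul_le_mul_of_nonneg_left e2 hK.le]
  have hest' := hest t ht _ (K * (cf + cg) * d) (by positivity) hbound
  calc ‖∫ s in (0:ℝ)..t, W (t - s) (PP (f s) (f s) - PP (g s) (g s))‖
      ≤ (K * (cf + cg) * d) * N * Real.exp (-(B*t)) := hest'
    _ = K * (cf + cg) * d * N * Real.exp (-(B*t)) := by ring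

lemma aux_R (K N E D R : ℝ) (hK : 0 < K) (hN : 0 < N) (hE : 0 ≤ E) (hD : 0 ≤ D)
    (hcond : 2 * Real.sqrt (K * N * E) + 2 * K * N * D ≤ 1)
    (hR : R = (1 - 2 * K * N * D -
      Real.sqrt ((1 - 2 * K * N * D) ^ 2 - 4 * K * N * E)) / (2 * K * N)) :
    0 ≤ R ∧ E + K * N * R * (2 * D + R) = R := by
  have hPE : (0:ℝ) ≤ K * N * E := by positivity
  have hsq : Real.sqrt (K * N * E) ^ 2 = K * N * E := Real.sq_sqrt hPE
  have hs0 : 0 ≤ Real.sqrt (K * N * E) := Real.sqrt_nonneg _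
  have ha : 0 ≤ 1 - 2 * K * N * D := by linarith
  have hΔ : 0 ≤ (1 - 2 * K * N * D) ^ 2 - 4 * K * N * E := by nlinarith
  have hsd : Real.sqrt ((1 - 2 * K * N * D) ^ 2 - 4 * K * N * E) ^ 2 =
      (1 - 2 * K * N * D) ^ 2 - 4 * K * N * E := Real.sq_sqrt hΔ
  have hsd0 : 0 ≤ Real.sqrt ((1 - 2 * K * N * D) ^ 2 - 4 * K * N * E) := Real.sqrt_nonneg _
  have hsd_le : Real.sqrt ((1 - 2 * K * N * D) ^ 2 - 4 * K * N * E) ≤ 1 - 2 * K * N * D := by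
    have h1 : (1 - 2 * K * N * D) ^ 2 - 4 * K * N * E ≤ (1 - 2 * K * N * D) ^ 2 := by
      nlinarith
    calc Real.sqrt ((1 - 2 * K * N * D) ^ 2 - 4 * K * N * E)
        ≤ Real.sqrt ((1 - 2 * K * N * D) ^ 2) := Real.sqrt_le_sqrt h1
      _ = 1 - 2 * K * N * D := Real.sqrt_sq ha
  have hKN : (2 * K * N) ≠ 0 := by positivity
  have h1 : 2 * K * N * R = 1 - 2 * K * N * D -
      Real.sqrt ((1 - 2 * K * N * D) ^ 2 - 4 * K * N * E) := by
    rw [hR]; field_simp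
  constructor
  · rw [hR]
    apply div_nonneg (by linarith) (by positivity)
  · have h3 : Real.sqrt ((1 - 2 * K * N * D) ^ 2 - 4 * K * N * E) =
        1 - 2 * K * N * D - 2 * K * N * R := by linarith
    rw [h3] at hsd
    have h6 : 4 * K * N * (E + K * N * R * (2 * D + R) - R) = 0 := by
      linear_combination hsd
    have h7 : E + K * N * R * (2 * D + R) - R = 0 := by
      rcases mul_eq_zero.mp h6 with h | h
      · exact absurd h (by positivity)
      · exact h
    linarith


open Set MeasureTheory

theorem stmt_7
    {F Fm : Type*}
    [NormedAddCommGroup F] [NormedSpace ℝ F] [CompleteSpace F]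
    [NormedAddCommGroup Fm] [NormedSpace ℝ Fm] [CompleteSpace Fm]
    -- F is a dense subspace of Fm, with continuous inclusion ι
    (ι : F →L[ℝ] Fm) (hι_inj : Function.Injective ι) (hι_dense : DenseRange ι)
    -- the semigroup (e^{tA})_{t ≥ 0} on Fm, strongly continuous
    (U : ℝ → Fm →L[ℝ] Fm)
    (hU0 : U 0 = ContinuousLinearMap.id ℝ Fm)
    (hUsem : ∀ s ≥ (0:ℝ), ∀ t ≥ (0:ℝ), U (s + t) = (U s).comp (U t))
    (hUsc : ∀ f : Fm, ContinuousOn (fun t => U t f) (Ici (0:ℝ)))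
    -- e^{tA} maps F into F (lift V), giving a strongly continuous semigroup on F
    (V : ℝ → F → F)
    (hV : ∀ t ≥ (0:ℝ), ∀ x : F, ι (V t x) = U t (ι x))
    (hVcont : ContinuousOn (fun p : F × ℝ => V p.2 p.1) (univ ×ˢ Ici (0:ℝ)))
    -- e^{tA} maps Fm into F for t > 0 (lift W), continuously on Fm × (0,∞)
    (W : ℝ → Fm → F)
    (hW : ∀ t > (0:ℝ), ∀ f : Fm, ι (W t f) = U t f)
    (hWcont : ContinuousOn (fun p : Fm × ℝ => W p.2 p.1) (univ ×ˢ Ioi (0:ℝ)))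
    -- the continuous bilinear map 𝒫 with constant K, and the forcing ξ
    (PP : F →L[ℝ] F →L[ℝ] Fm) (K : ℝ) (hK : 0 < K)
    (hPP : ∀ f g : F, ‖PP f g‖ ≤ K * ‖f‖ * ‖g‖)
    (ξ : ℝ → Fm)
    (hξ : ∀ C : Set ℝ, IsCompact C → C ⊆ Ici (0:ℝ) →
      ∃ M : ℝ, ∀ t ∈ C, ∀ t' ∈ C, ‖ξ t - ξ t'‖ ≤ M * |t - t'|)
    -- constants B, N and the exponential semigroup estimators (P4'), (P5')
    (B N : ℝ) (hB : 0 ≤ B) (hN : 0 < N)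
    (hu_bd : ∀ t ≥ (0:ℝ), ∀ x : F, ‖V t x‖ ≤ Real.exp (-(B * t)) * ‖x‖)
    (μm : ℝ → ℝ)
    (hμm_cont : ContinuousOn μm (Ioi (0:ℝ)))
    (hμm_pos : ∀ t > (0:ℝ), 0 < μm t)
    (hμm_bd : ∀ t > (0:ℝ), ∀ f : Fm, ‖W t f‖ ≤ μm t * Real.exp (-(B * t)) * ‖f‖)
    (σ : ℝ) (hσ : σ ∈ Ioc (0:ℝ) 1)
    (hμm_O : ∃ C : ℝ, ∃ δ > (0:ℝ), ∀ t ∈ Ioo (0:ℝ) δ, μm t ≤ C / t ^ (1 - σ))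
    (hμm_N : ∀ t ≥ (0:ℝ), (∫ s in (0:ℝ)..t, μm (t - s) * Real.exp (-(B * s))) ≤ N)
    -- datum and approximate solution on [0,∞)
    (f₀ : F) (φap : ℝ → F) (hφap_cont : ContinuousOn φap (Ici (0:ℝ)))
    (E D : ℝ) (hE : 0 ≤ E) (hD : 0 ≤ D)
    (hEb : ∀ t ≥ (0:ℝ),
      ‖φap t - V t f₀ - ∫ s in (0:ℝ)..t, W (t - s) (PP (φap s) (φap s) + ξ s)‖ ≤
        E * Real.exp (-(B * t)))
    (hDb : ∀ t ≥ (0:ℝ), ‖φap t‖ ≤ D * Real.exp (-(B * t)))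
    (hcond : 2 * Real.sqrt (K * N * E) + 2 * K * N * D ≤ 1)
    (R : ℝ)
    (hR : R = (1 - 2 * K * N * D -
      Real.sqrt ((1 - 2 * K * N * D) ^ 2 - 4 * K * N * E)) / (2 * K * N)) :
    ∃ φ : ℝ → F, ContinuousOn φ (Ici (0:ℝ)) ∧
      (∀ t ≥ (0:ℝ), φ t = V t f₀ + ∫ s in (0:ℝ)..t, W (t - s) (PP (φ s) (φ s) + ξ s)) ∧
      ∀ t ≥ (0:ℝ), ‖φ t - φap t‖ ≤ R * Real.exp (-(B * t)) := by
  classical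
  -- preliminaries
  have hξc : ContinuousOn ξ (Ici 0) := aux_xi_cont ξ hξ
  have hμint : ∀ t ≥ (0:ℝ), IntervalIntegrable μm volume 0 t :=
    aux_mum_int hμm_cont hμm_pos hσ hμm_O
  have hWsub := aux_W_sub ι hι_inj U W hW
  have hWint : ∀ t : ℝ, 0 < t → ∀ h : ℝ → Fm, ContinuousOn h (Icc 0 t) →
      IntervalIntegrable (fun s => W (t - s) (h s)) volume 0 t :=
    fun t ht h hh => aux_W_int W μm B hWcont hB hμm_bd hμm_pos ht (hμint t ht.le) h hh
  have hest : ∀ t : ℝ, 0 ≤ t → ∀ h : ℝ → Fm, ∀ c : ℝ, 0 ≤ c →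
      (∀ s ∈ Icc (0:ℝ) t, ‖h s‖ ≤ c * Real.exp (-(B * s)) * Real.exp (-(B * s))) →
      ‖∫ s in (0:ℝ)..t, W (t - s) (h s)‖ ≤ c * N * Real.exp (-(B * t)) :=
    fun t ht h c hc hbd =>
      aux_est W μm B N hB hN.le hμm_bd hμm_pos ht (hμint t ht) (hμm_N t ht) h c hc hbd
  have hJcont : ∀ h : ℝ → Fm, ContinuousOn h (Ici 0) →
      ContinuousOn (fun t => ∫ s in (0:ℝ)..t, W (t - s) (h s)) (Ici 0) :=
    fun h hh => aux_cont W μm B hWcont hB hμm_bd hμm_pos hμint h hh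
  have hVc : ContinuousOn (fun t => V t f₀) (Ici (0:ℝ)) := by
    have heq : (fun t => V t f₀) = (fun p : F × ℝ => V p.2 p.1) ∘ (fun t => (f₀, t)) := rfl
    rw [heq]
    exact hVcont.comp ((continuous_const.prodMk continuous_id).continuousOn)
      (fun t ht => ⟨mem_univ _, ht⟩)
  obtain ⟨hR0, hRfix⟩ := aux_R K N E D R hK hN hE hD hcond hR
  -- the scalar iteration
  set g : ℝ → ℝ := fun x => E + K * N * x * (2 * D + x) with hg
  obtain ⟨r, hr0, hrS⟩ : ∃ r : ℕ → ℝ, r 0 = 0 ∧ ∀ n, r (n + 1) = g (r n) :=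
    ⟨fun n => Nat.rec (motive := fun _ => ℝ) 0 (fun _ x => g x) n, rfl, fun _ => rfl⟩
  have hgmono : ∀ x y : ℝ, 0 ≤ x → x ≤ y → g x ≤ g y := by
    intro x y hx hxy
    simp only [hg]
    nlinarith [mul_nonneg (mul_nonneg (mul_pos hK hN).le (sub_nonneg.mpr hxy))
      (by linarith : (0:ℝ) ≤ 2 * D + x + y)]
  have hrprop : ∀ n, 0 ≤ r n ∧ r n ≤ r (n + 1) ∧ r n ≤ R := by
    intro n
    induction n with
    | zero =>
      refine ⟨le_of_eq hr0.symm, ?_, by rw [hr0]; exact hR0⟩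
      rw [hrS 0, hr0]
      have hgE : g 0 = E := by simp only [hg]; ring
      rw [hgE]; exact hE
    | succ n ih =>
      obtain ⟨h1, h2, h3⟩ := ih
      refine ⟨h1.trans h2, ?_, ?_⟩
      · calc r (n+1) = g (r n) := hrS n
          _ ≤ g (r (n+1)) := hgmono _ _ h1 h2
          _ = r (n+1+1) := (hrS (n+1)).symm
      · calc r (n+1) = g (r n) := hrS n
          _ ≤ g R := hgmono _ _ h1 h3
          _ = R := hRfix
  -- the Picard iteration
  obtain ⟨ψ, hψ0, hψS⟩ : ∃ ψ : ℕ → ℝ → F, ψ 0 = φap ∧ ∀ n t, ψ (n + 1) t =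
      V t f₀ + ∫ s in (0:ℝ)..t, W (t - s) (PP (ψ n s) (ψ n s) + ξ s) :=
    ⟨fun n => Nat.rec (motive := fun _ => ℝ → F) φap
      (fun _ p => fun t => V t f₀ + ∫ s in (0:ℝ)..t, W (t - s) (PP (p s) (p s) + ξ s)) n,
      rfl, fun _ _ => rfl⟩
  have hψcont : ∀ n, ContinuousOn (ψ n) (Ici 0) := by
    intro n
    induction n with
    | zero => exact hψ0 ▸ hφap_cont
    | succ n ih =>
      have hc : ContinuousOn (fun s => PP (ψ n s) (ψ n s) + ξ s) (Ici 0) :=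
        aux_hcont PP ξ hξc _ ih
      have heq : ψ (n+1) = fun t =>
          V t f₀ + ∫ s in (0:ℝ)..t, W (t - s) (PP (ψ n s) (ψ n s) + ξ s) :=
        funext (hψS n)
      rw [heq]
      exact hVc.add (hJcont _ hc)
  -- the key bounds
  have hψbd : ∀ n, ∀ t ≥ (0:ℝ), ‖ψ n t - φap t‖ ≤ r n * Real.exp (-(B * t)) := by
    intro n
    induction n with
    | zero => intro t ht; rw [hψ0, hr0]; simp
    | succ n ih =>
      intro t ht
      have hψnorm : ∀ s ≥ (0:ℝ), ‖ψ n s‖ ≤ (D + r n) * Real.exp (-(B * s)) := by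
        intro s hs
        calc ‖ψ n s‖ = ‖(ψ n s - φap s) + φap s‖ := by rw [sub_add_cancel]
          _ ≤ ‖ψ n s - φap s‖ + ‖φap s‖ := norm_add_le _ _
          _ ≤ r n * Real.exp (-(B * s)) + D * Real.exp (-(B * s)) :=
              add_le_add (ih s hs) (hDb s hs)
          _ = (D + r n) * Real.exp (-(B * s)) := by ring
      have hdiff := aux_diff W B N K PP ξ hWint hest hK hN.le hPP hξc hWsub
        (ψ n) φap (hψcont n) hφap_cont (D + r n) D (r n)
        (by linarith [(hrprop n).1]) hD (hrprop n).1
        hψnorm hDb ih ht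
      have hid : ψ (n+1) t - φap t =
          ((∫ s in (0:ℝ)..t, W (t - s) (PP (ψ n s) (ψ n s) + ξ s)) -
            ∫ s in (0:ℝ)..t, W (t - s) (PP (φap s) (φap s) + ξ s)) -
          (φap t - V t f₀ - ∫ s in (0:ℝ)..t, W (t - s) (PP (φap s) (φap s) + ξ s)) := by
        rw [hψS]
        abel
      rw [hid]
      calc ‖_ - _‖ ≤ ‖(∫ s in (0:ℝ)..t, W (t - s) (PP (ψ n s) (ψ n s) + ξ s)) -
            ∫ s in (0:ℝ)..t, W (t - s) (PP (φap s) (φap s) + ξ s)‖ +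
            ‖φap t - V t f₀ - ∫ s in (0:ℝ)..t, W (t - s) (PP (φap s) (φap s) + ξ s)‖ :=
          norm_sub_le _ _
        _ ≤ K * ((D + r n) + D) * r n * N * Real.exp (-(B * t)) +
            E * Real.exp (-(B * t)) := add_le_add hdiff (hEb t ht)
        _ = r (n+1) * Real.exp (-(B * t)) := by rw [hrS]; simp only [hg]; ring
  have hψdiff : ∀ n, ∀ t ≥ (0:ℝ),
      ‖ψ (n+1) t - ψ n t‖ ≤ (r (n+1) - r n) * Real.exp (-(B * t)) := by
    intro n
    induction n with
    | zero =>
      intro t ht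
      have hid : ψ (0+1) t - ψ 0 t =
          -(φap t - V t f₀ - ∫ s in (0:ℝ)..t, W (t - s) (PP (φap s) (φap s) + ξ s)) := by
        rw [hψS 0, hψ0]
        abel
      rw [hid, norm_neg]
      have hr1 : r (0+1) - r 0 = E := by rw [hrS 0, hr0]; simp only [hg]; ring
      rw [hr1]
      exact hEb t ht
    | succ n ih =>
      intro t ht
      have hψnorm : ∀ m, ∀ s ≥ (0:ℝ), ‖ψ m s‖ ≤ (D + r m) * Real.exp (-(B * s)) := by
        intro m s hs
        calc ‖ψ m s‖ = ‖(ψ m s - φap s) + φap s‖ := by rw [sub_add_cancel]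
          _ ≤ ‖ψ m s - φap s‖ + ‖φap s‖ := norm_add_le _ _
          _ ≤ r m * Real.exp (-(B * s)) + D * Real.exp (-(B * s)) :=
              add_le_add (hψbd m s hs) (hDb s hs)
          _ = (D + r m) * Real.exp (-(B * s)) := by ring
      have hdiff := aux_diff W B N K PP ξ hWint hest hK hN.le hPP hξc hWsub
        (ψ (n+1)) (ψ n) (hψcont (n+1)) (hψcont n)
        (D + r (n+1)) (D + r n) (r (n+1) - r n)
        (by linarith [(hrprop (n+1)).1]) (by linarith [(hrprop n).1])
        (by linarith [(hrprop n).2.1])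
        (hψnorm (n+1)) (hψnorm n) ih ht
      have hid : ψ (n+1+1) t - ψ (n+1) t =
          ((∫ s in (0:ℝ)..t, W (t - s) (PP (ψ (n+1) s) (ψ (n+1) s) + ξ s)) -
            ∫ s in (0:ℝ)..t, W (t - s) (PP (ψ n s) (ψ n s) + ξ s)) := by
        rw [hψS (n+1), hψS n]
        abel
      rw [hid]
      calc ‖_ - _‖ ≤ K * ((D + r (n+1)) + (D + r n)) * (r (n+1) - r n) * N *
            Real.exp (-(B * t)) := hdiff
        _ = (r (n+1+1) - r (n+1)) * Real.exp (-(B * t)) := by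
            rw [hrS (n+1), hrS n]; simp only [hg]; ring
  -- telescoped bound
  have htel : ∀ n m, n ≤ m → ∀ t ≥ (0:ℝ),
      ‖ψ m t - ψ n t‖ ≤ (r m - r n) * Real.exp (-(B * t)) := by
    intro n m hnm
    induction m, hnm using Nat.le_induction with
    | base => intro t ht; simp
    | succ m hnm ih =>
      intro t ht
      calc ‖ψ (m+1) t - ψ n t‖ = ‖(ψ (m+1) t - ψ m t) + (ψ m t - ψ n t)‖ := by rw [sub_add_sub_cancel]
        _ ≤ ‖ψ (m+1) t - ψ m t‖ + ‖ψ m t - ψ n t‖ := norm_add_le _ _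
        _ ≤ (r (m+1) - r m) * Real.exp (-(B * t)) + (r m - r n) * Real.exp (-(B * t)) :=
            add_le_add (hψdiff m t ht) (ih t ht)
        _ = (r (m+1) - r n) * Real.exp (-(B * t)) := by ring
  -- summability of the increments
  have hdnn : ∀ n, 0 ≤ r (n+1) - r n := fun n => by linarith [(hrprop n).2.1]
  have hsum : Summable (fun n => r (n+1) - r n) := by
    apply summable_of_sum_range_le (c := R) hdnn
    intro n
    rw [Finset.sum_range_sub (f := r)]
    rw [hr0]
    have := (hrprop n).2.2
    linarith
  have hexple : ∀ t ≥ (0:ℝ), Real.exp (-(B * t)) ≤ 1 := by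
    intro t ht
    apply Real.exp_le_one_iff.mpr
    nlinarith
  -- Cauchy and limit
  have hcauchy : ∀ t ≥ (0:ℝ), CauchySeq (fun n => ψ n t) := by
    intro t ht
    apply cauchySeq_of_dist_le_of_summable (fun n => r (n+1) - r n) _ hsum
    intro n
    rw [dist_eq_norm, norm_sub_rev]
    calc ‖ψ (n+1) t - ψ n t‖ ≤ (r (n+1) - r n) * Real.exp (-(B * t)) := hψdiff n t ht
      _ ≤ (r (n+1) - r n) * 1 := mul_le_mul_of_nonneg_left (hexple t ht) (hdnn n)
      _ = r (n+1) - r n := mul_one _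
  have hconv : ∀ t : ℝ, 0 ≤ t → ∃ x : F, Tendsto (fun n => ψ n t) atTop (𝓝 x) :=
    fun t ht => cauchySeq_tendsto_of_complete (hcauchy t ht)
  obtain ⟨φ, hφlim⟩ : ∃ φ : ℝ → F, ∀ t ≥ (0:ℝ),
      Tendsto (fun n => ψ n t) atTop (𝓝 (φ t)) := by
    choose Φ hΦ using hconv
    refine ⟨fun t => if h : (0:ℝ) ≤ t then Φ t h else φap t, fun t ht => ?_⟩
    simp only [dif_pos ht]
    exact hΦ t ht
  -- limit of r
  have hrmono : Monotone r := monotone_nat_of_le_succ (fun n => (hrprop n).2.1)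
  have hbdd : BddAbove (Set.range r) := ⟨R, by rintro x ⟨n, rfl⟩; exact (hrprop n).2.2⟩
  set L : ℝ := ⨆ n, r n with hLdef
  have hrL : Tendsto r atTop (𝓝 L) := tendsto_atTop_ciSup hrmono hbdd
  have hrnL : ∀ n, r n ≤ L := fun n => le_ciSup hbdd n
  have hLR : L ≤ R := ciSup_le (fun n => (hrprop n).2.2)
  have hL0 : 0 ≤ L := le_trans (hrprop 0).1 (hrnL 0)
  -- tail bound
  have hφtail : ∀ n, ∀ t ≥ (0:ℝ), ‖φ t - ψ n t‖ ≤ (L - r n) * Real.exp (-(B * t)) := by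
    intro n t ht
    have h1 : Tendsto (fun m => ‖ψ m t - ψ n t‖) atTop (𝓝 ‖φ t - ψ n t‖) :=
      ((hφlim t ht).sub tendsto_const_nhds).norm
    apply le_of_tendsto h1
    filter_upwards [eventually_ge_atTop n] with m hm
    calc ‖ψ m t - ψ n t‖ ≤ (r m - r n) * Real.exp (-(B * t)) := htel n m hm t ht
      _ ≤ (L - r n) * Real.exp (-(B * t)) :=
          mul_le_mul_of_nonneg_right (by linarith [hrnL m]) (Real.exp_pos _).le
  have hφap_bd : ∀ t ≥ (0:ℝ), ‖φ t - φap t‖ ≤ L * Real.exp (-(B * t)) := by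
    intro t ht
    have := hφtail 0 t ht
    rw [hψ0, hr0] at this
    simpa using this
  have hφnorm : ∀ s ≥ (0:ℝ), ‖φ s‖ ≤ (D + L) * Real.exp (-(B * s)) := by
    intro s hs
    calc ‖φ s‖ = ‖(φ s - φap s) + φap s‖ := by rw [sub_add_cancel]
      _ ≤ ‖φ s - φap s‖ + ‖φap s‖ := norm_add_le _ _
      _ ≤ L * Real.exp (-(B * s)) + D * Real.exp (-(B * s)) :=
          add_le_add (hφap_bd s hs) (hDb s hs)
      _ = (D + L) * Real.exp (-(B * s)) := by ring
  -- uniform convergence and continuity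
  have hLrn : Tendsto (fun n => L - r n) atTop (𝓝 0) := by
    have := tendsto_const_nhds (x := L) (f := atTop (α := ℕ))
    simpa using this.sub hrL
  have huc : TendstoUniformlyOn (fun n t => ψ n t) φ atTop (Ici 0) := by
    rw [Metric.tendstoUniformlyOn_iff]
    intro ε hε
    filter_upwards [hLrn.eventually (eventually_lt_nhds hε)] with n hn t ht
    have ht' : (0:ℝ) ≤ t := ht
    rw [dist_eq_norm]
    calc ‖φ t - ψ n t‖ ≤ (L - r n) * Real.exp (-(B * t)) := hφtail n t ht'
      _ ≤ (L - r n) * 1 :=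
          mul_le_mul_of_nonneg_left (hexple t ht') (by linarith [hrnL n])
      _ = L - r n := mul_one _
      _ < ε := hn
  have hφcont : ContinuousOn φ (Ici 0) :=
    huc.continuousOn (Filter.Eventually.of_forall hψcont).frequently
  -- the integral equation
  refine ⟨φ, hφcont, ?_, ?_⟩
  · intro t ht
    have hψnorm : ∀ m, ∀ s ≥ (0:ℝ), ‖ψ m s‖ ≤ (D + r m) * Real.exp (-(B * s)) := by
      intro m s hs
      calc ‖ψ m s‖ = ‖(ψ m s - φap s) + φap s‖ := by rw [sub_add_cancel]
        _ ≤ ‖ψ m s - φap s‖ + ‖φap s‖ := norm_add_le _ _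
        _ ≤ r m * Real.exp (-(B * s)) + D * Real.exp (-(B * s)) :=
            add_le_add (hψbd m s hs) (hDb s hs)
        _ = (D + r m) * Real.exp (-(B * s)) := by ring
    have hnd : ∀ n, ∀ s ≥ (0:ℝ), ‖ψ n s - φ s‖ ≤ (L - r n) * Real.exp (-(B * s)) := by
      intro n s hs
      rw [norm_sub_rev]
      exact hφtail n s hs
    have hdiffn : ∀ n,
        ‖(∫ s in (0:ℝ)..t, W (t - s) (PP (ψ n s) (ψ n s) + ξ s)) -
          ∫ s in (0:ℝ)..t, W (t - s) (PP (φ s) (φ s) + ξ s)‖ ≤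
        K * ((D + r n) + (D + L)) * (L - r n) * N * Real.exp (-(B * t)) := by
      intro n
      exact aux_diff W B N K PP ξ hWint hest hK hN.le hPP hξc hWsub
        (ψ n) φ (hψcont n) hφcont (D + r n) (D + L) (L - r n)
        (by linarith [(hrprop n).1]) (by linarith)
        (by linarith [hrnL n])
        (hψnorm n) hφnorm (hnd n) ht
    have hbnd0 : Tendsto (fun n => K * ((D + r n) + (D + L)) * (L - r n) * N *
        Real.exp (-(B * t))) atTop (𝓝 0) := by
      have h1 : Tendsto (fun n => K * ((D + r n) + (D + L))) atTop
          (𝓝 (K * ((D + L) + (D + L)))) :=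
        tendsto_const_nhds.mul (((hrL.const_add D)).add_const (D + L))
      have h2 := ((h1.mul hLrn).mul_const N).mul_const (Real.exp (-(B * t)))
      simpa using h2
    have hJlim : Tendsto (fun n => ∫ s in (0:ℝ)..t, W (t - s) (PP (ψ n s) (ψ n s) + ξ s))
        atTop (𝓝 (∫ s in (0:ℝ)..t, W (t - s) (PP (φ s) (φ s) + ξ s))) := by
      rw [tendsto_iff_norm_sub_tendsto_zero]
      exact squeeze_zero (fun n => norm_nonneg _) (fun n => hdiffn n) hbnd0
    have hlhs : Tendsto (fun n => ψ (n+1) t) atTop (𝓝 (φ t)) :=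
      (hφlim t ht).comp (tendsto_add_atTop_nat 1)
    have hrhs : Tendsto (fun n => ψ (n+1) t) atTop
        (𝓝 (V t f₀ + ∫ s in (0:ℝ)..t, W (t - s) (PP (φ s) (φ s) + ξ s))) := by
      simp only [hψS]
      exact tendsto_const_nhds.add hJlim
    exact tendsto_nhds_unique hlhs hrhs
  · intro t ht
    calc ‖φ t - φap t‖ ≤ L * Real.exp (-(B * t)) := hφap_bd t ht
      _ ≤ R * Real.exp (-(B * t)) :=
          mul_le_mul_of_nonneg_right hLR (Real.exp_pos _).le
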